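/- Let n ≥ 1 and let B, A₁, A₂ be symmetric real n×n matrices with B positive definite and A₁, A₂ positive semidefinite. Set A = A₁ + A₂, let τ > 0 and σ ≥ 1/2. If sequences y : ℕ → ℝⁿ and φ : ℕ → ℝⁿ satisfy (B + στA₁) B⁻¹ (B + στA₂) ((y(k+1) − y(k))/τ) + A y(k) = φ(k) for every k ∈ ℕ, then for every N ∈ ℕ one has ‖(B + στA₂) y(N)‖_{B⁻¹} ≤ ‖(B + στA₂) y(0)‖_{B⁻¹} + τ Σ_{k=0}^{N−1} ‖φ(k)‖_{B⁻¹}. -/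

import Mathlib

set_option maxHeartbeats 1000000

open Matrix

/-- The `B⁻¹`-weighted norm `‖x‖_{B⁻¹} = √(xᵀ B⁻¹ x)`. -/
noncomputable def normBinv {n : ℕ} (B : Matrix (Fin n) (Fin n) ℝ) (x : Fin n → ℝ) : ℝ :=
  Real.sqrt (x ⬝ᵥ B⁻¹ *ᵥ x)

section Helpers

variable {n : ℕ}

lemma swapDV {M : Matrix (Fin n) (Fin n) ℝ} (hM : M.IsHermitian) (x z : Fin n → ℝ) :
    x ⬝ᵥ M *ᵥ z = z ⬝ᵥ M *ᵥ x := by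
  have hMt : Mᵀ = M := by simpa using (Matrix.isHermitian_iff_isSymm.mp hM).eq
  rw [Matrix.dotProduct_mulVec, ← hMt, Matrix.vecMul_transpose, hMt, dotProduct_comm]

lemma psd_apply {M : Matrix (Fin n) (Fin n) ℝ} (hM : M.PosSemidef) (x : Fin n → ℝ) :
    0 ≤ x ⬝ᵥ M *ᵥ x := by simpa using hM.dotProduct_mulVec_nonneg x


lemma psd_cs {P : Matrix (Fin n) (Fin n) ℝ} (hP : P.PosSemidef) (x z : Fin n → ℝ) :
    (x ⬝ᵥ P *ᵥ z) ^ 2 ≤ (x ⬝ᵥ P *ᵥ x) * (z ⬝ᵥ P *ᵥ z) := by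
  have key : ∀ t : ℝ, 0 ≤ (z ⬝ᵥ P *ᵥ z) * (t * t) + (2 * (x ⬝ᵥ P *ᵥ z)) * t + (x ⬝ᵥ P *ᵥ x) := by
    intro t
    have h0 := psd_apply hP (x + t • z)
    simp only [Matrix.mulVec_add, Matrix.mulVec_smul, dotProduct_add, add_dotProduct,
      dotProduct_smul, smul_dotProduct, smul_eq_mul] at h0
    rw [swapDV hP.1 z x] at h0
    nlinarith [h0]
  have hd := discrim_le_zero key
  unfold discrim at hd
  nlinarith [hd]

lemma psd_triangle {P : Matrix (Fin n) (Fin n) ℝ} (hP : P.PosSemidef) (x z : Fin n → ℝ) :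
    Real.sqrt ((x + z) ⬝ᵥ P *ᵥ (x + z)) ≤
      Real.sqrt (x ⬝ᵥ P *ᵥ x) + Real.sqrt (z ⬝ᵥ P *ᵥ z) := by
  have hx := psd_apply hP x
  have hz := psd_apply hP z
  have hm : (x ⬝ᵥ P *ᵥ z) ≤ Real.sqrt (x ⬝ᵥ P *ᵥ x) * Real.sqrt (z ⬝ᵥ P *ᵥ z) := by
    have h1 := psd_cs hP x z
    have h2 : Real.sqrt ((x ⬝ᵥ P *ᵥ z) ^ 2) ≤ Real.sqrt ((x ⬝ᵥ P *ᵥ x) * (z ⬝ᵥ P *ᵥ z)) :=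
      Real.sqrt_le_sqrt h1
    rw [Real.sqrt_sq_eq_abs, Real.sqrt_mul hx] at h2
    exact (le_abs_self _).trans h2
  have hexp : (x + z) ⬝ᵥ P *ᵥ (x + z)
      ≤ (Real.sqrt (x ⬝ᵥ P *ᵥ x) + Real.sqrt (z ⬝ᵥ P *ᵥ z)) ^ 2 := by
    have e1 : Real.sqrt (x ⬝ᵥ P *ᵥ x) ^ 2 = x ⬝ᵥ P *ᵥ x := Real.sq_sqrt hx
    have e2 : Real.sqrt (z ⬝ᵥ P *ᵥ z) ^ 2 = z ⬝ᵥ P *ᵥ z := Real.sq_sqrt hz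
    have hs := swapDV hP.1 z x
    simp only [Matrix.mulVec_add, dotProduct_add, add_dotProduct] at *
    nlinarith [hm, e1, e2, hs]
  calc Real.sqrt ((x + z) ⬝ᵥ P *ᵥ (x + z))
      ≤ Real.sqrt ((Real.sqrt (x ⬝ᵥ P *ᵥ x) + Real.sqrt (z ⬝ᵥ P *ᵥ z)) ^ 2) :=
        Real.sqrt_le_sqrt hexp
    _ = _ := by rw [Real.sqrt_sq (by positivity)]

end Helpers

theorem factorized_scheme_multi_level_stability
    {n : ℕ} (hn : 1 ≤ n)
    (B A₁ A₂ : Matrix (Fin n) (Fin n) ℝ)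
    (hB : B.PosDef) (hA₁ : A₁.PosSemidef) (hA₂ : A₂.PosSemidef)
    (A : Matrix (Fin n) (Fin n) ℝ) (hA : A = A₁ + A₂)
    (τ σ : ℝ) (hτ : 0 < τ) (hσ : 1 / 2 ≤ σ)
    (y φ : ℕ → Fin n → ℝ)
    (hscheme : ∀ k : ℕ,
      ((B + (σ * τ) • A₁) * B⁻¹ * (B + (σ * τ) • A₂)) *ᵥ ((1 / τ) • (y (k + 1) - y k))
        + A *ᵥ y k = φ k) :
    ∀ N : ℕ,
      normBinv B ((B + (σ * τ) • A₂) *ᵥ y N)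
        ≤ normBinv B ((B + (σ * τ) • A₂) *ᵥ y 0)
          + τ * ∑ k ∈ Finset.range N, normBinv B (φ k) := by
  have hσ0 : (0:ℝ) < σ := lt_of_lt_of_le (by norm_num) hσ
  set s := σ * τ with hsdef
  have hs : 0 < s := mul_pos hσ0 hτ
  set S₁ := B + s • A₁ with hS₁def
  set T := B + s • A₂ with hTdef
  have hA₁t : A₁ᵀ = A₁ := by simpa using (Matrix.isHermitian_iff_isSymm.mp hA₁.1).eq
  have hA₂t : A₂ᵀ = A₂ := by simpa using (Matrix.isHermitian_iff_isSymm.mp hA₂.1).eq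
  have hBt : Bᵀ = B := by simpa using (Matrix.isHermitian_iff_isSymm.mp hB.1).eq
  have hsA₁ : (s • A₁).PosSemidef := by
    refine Matrix.PosSemidef.of_dotProduct_mulVec_nonneg ?_ (fun x => ?_)
    · unfold Matrix.IsHermitian
      rw [Matrix.conjTranspose_smul]
      simp [hA₁t]
    · simp only [Matrix.smul_mulVec, dotProduct_smul, smul_eq_mul]
      exact mul_nonneg hs.le (by simpa using hA₁.dotProduct_mulVec_nonneg x)
  have hS₁ : S₁.PosDef := hB.add_posSemidef hsA₁
  have hT_herm : T.IsHermitian := by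
    unfold Matrix.IsHermitian
    rw [Matrix.conjTranspose_add, Matrix.conjTranspose_smul]
    simp [hBt, hA₂t, hTdef]
  have hBdet : IsUnit B.det := (Matrix.isUnit_iff_isUnit_det B).mp hB.isUnit
  have hS₁det : IsUnit S₁.det := (Matrix.isUnit_iff_isUnit_det S₁).mp hS₁.isUnit
  have hG : B⁻¹.PosDef := hB.inv
  have hBcan : ∀ x : Fin n → ℝ, B⁻¹ *ᵥ (B *ᵥ x) = x := by
    intro x
    rw [Matrix.mulVec_mulVec, Matrix.nonsing_inv_mul B hBdet, Matrix.one_mulVec]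
  have hS₁can : ∀ x : Fin n → ℝ, S₁ *ᵥ (S₁⁻¹ *ᵥ x) = x := by
    intro x
    rw [Matrix.mulVec_mulVec, Matrix.mul_nonsing_inv S₁ hS₁det, Matrix.one_mulVec]
  have step : ∀ k : ℕ,
      normBinv B (T *ᵥ y (k+1)) ≤ normBinv B (T *ᵥ y k) + τ * normBinv B (φ k) := by
    intro k
    -- update equation
    set v := S₁⁻¹ *ᵥ (A *ᵥ y k) with hvdef
    set ψ := S₁⁻¹ *ᵥ (φ k) with hψdef
    have hveq : S₁ *ᵥ v = A *ᵥ y k := hS₁can _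
    have hψeq : S₁ *ᵥ ψ = φ k := hS₁can _
    have h1 : (S₁ * B⁻¹ * T) *ᵥ (y (k+1) - y k) = τ • (φ k - A *ᵥ y k) := by
      have h := hscheme k
      rw [Matrix.mulVec_smul] at h
      have h' : (1/τ) • ((S₁ * B⁻¹ * T) *ᵥ (y (k+1) - y k)) = φ k - A *ᵥ y k :=
        eq_sub_of_add_eq h
      have h'' := congrArg (fun w : Fin n → ℝ => τ • w) h'
      simpa [smul_smul, mul_inv_cancel₀ hτ.ne'] using h''
    have hmat : (B * S₁⁻¹) * (S₁ * B⁻¹ * T) = T := by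
      rw [show (B * S₁⁻¹) * (S₁ * B⁻¹ * T) = B * (S₁⁻¹ * S₁) * (B⁻¹ * T) by
        simp only [Matrix.mul_assoc],
        Matrix.nonsing_inv_mul S₁ hS₁det, Matrix.mul_one, ← Matrix.mul_assoc,
        Matrix.mul_nonsing_inv B hBdet, Matrix.one_mul]
    have h2 : T *ᵥ (y (k+1) - y k) = τ • (B *ᵥ ψ) - τ • (B *ᵥ v) := by
      have h3 := congrArg (fun w : Fin n → ℝ => (B * S₁⁻¹) *ᵥ w) h1
      simp only [Matrix.mulVec_mulVec] at h3
      rw [hmat] at h3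
      rw [h3, Matrix.mulVec_smul, ← Matrix.mulVec_mulVec, Matrix.mulVec_sub,
        ← hψdef, ← hvdef, Matrix.mulVec_sub, smul_sub]
    have hupd : T *ᵥ y (k+1) = (T *ᵥ y k - τ • (B *ᵥ v)) + τ • (B *ᵥ ψ) := by
      have h2' : T *ᵥ y (k+1) - T *ᵥ y k = τ • (B *ᵥ ψ) - τ • (B *ᵥ v) := by
        rw [← Matrix.mulVec_sub, h2]
      exact (eq_add_of_sub_eq h2').trans (by abel)
    -- Claim B : contraction
    set w := T *ᵥ y k with hwdef
    have e1 : (B *ᵥ v) ⬝ᵥ B⁻¹ *ᵥ w = w ⬝ᵥ v := by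
      rw [swapDV hG.1, hBcan]
    have e3 : (B *ᵥ v) ⬝ᵥ v = v ⬝ᵥ B *ᵥ v := dotProduct_comm _ _
    have expand : (w - τ • (B *ᵥ v)) ⬝ᵥ B⁻¹ *ᵥ (w - τ • (B *ᵥ v))
        = w ⬝ᵥ B⁻¹ *ᵥ w - 2*τ*(w ⬝ᵥ v) + τ*τ*(v ⬝ᵥ B *ᵥ v) := by
      simp only [Matrix.mulVec_sub, Matrix.mulVec_smul, hBcan v, dotProduct_sub,
        sub_dotProduct, dotProduct_smul, smul_dotProduct, smul_eq_mul, e1, e3]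
      ring
    -- scalar identities
    have hwv : w ⬝ᵥ v = y k ⬝ᵥ B *ᵥ v + s * (y k ⬝ᵥ A₂ *ᵥ v) := by
      rw [hwdef, dotProduct_comm, ← swapDV hT_herm (y k) v, hTdef]
      simp only [Matrix.add_mulVec, Matrix.smul_mulVec, dotProduct_add,
        dotProduct_smul, smul_eq_mul]
    have hsw1 : v ⬝ᵥ A₁ *ᵥ y k = y k ⬝ᵥ A₁ *ᵥ v := swapDV hA₁.1 v (y k)
    have hsw2 : v ⬝ᵥ A₂ *ᵥ y k = y k ⬝ᵥ A₂ *ᵥ v := swapDV hA₂.1 v (y k)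
    have hc1 : y k ⬝ᵥ B *ᵥ v + s * (y k ⬝ᵥ A₁ *ᵥ v)
        = y k ⬝ᵥ A₁ *ᵥ y k + y k ⬝ᵥ A₂ *ᵥ y k := by
      have := congrArg (fun u : Fin n → ℝ => y k ⬝ᵥ u) hveq
      simpa only [hS₁def, hA, Matrix.add_mulVec, Matrix.smul_mulVec, dotProduct_add,
        dotProduct_smul, smul_eq_mul] using this
    have hc2 : v ⬝ᵥ B *ᵥ v + s * (v ⬝ᵥ A₁ *ᵥ v)
        = y k ⬝ᵥ A₁ *ᵥ v + y k ⬝ᵥ A₂ *ᵥ v := by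
      have := congrArg (fun u : Fin n → ℝ => v ⬝ᵥ u) hveq
      simpa only [hS₁def, hA, Matrix.add_mulVec, Matrix.smul_mulVec, dotProduct_add,
        dotProduct_smul, smul_eq_mul, hsw1, hsw2] using this
    have h3 : 0 ≤ y k ⬝ᵥ A₁ *ᵥ y k - 2*(s*(y k ⬝ᵥ A₁ *ᵥ v)) + s*(s*(v ⬝ᵥ A₁ *ᵥ v)) := by
      have h0 := psd_apply hA₁ (y k - s • v)
      simp only [Matrix.mulVec_sub, Matrix.mulVec_smul, dotProduct_sub, sub_dotProduct,
        dotProduct_smul, smul_dotProduct, smul_eq_mul, hsw1] at h0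
      nlinarith [h0]
    have h4 : 0 ≤ y k ⬝ᵥ A₂ *ᵥ y k := psd_apply hA₂ (y k)
    have h5 : 0 ≤ v ⬝ᵥ B *ᵥ v := psd_apply hB.posSemidef v
    have hτs : τ ≤ 2*s := by rw [hsdef]; nlinarith
    have hr2 : τ * (v ⬝ᵥ B *ᵥ v) ≤ 2*(s*(v ⬝ᵥ B *ᵥ v)) := by nlinarith
    have hc2s : s*(v ⬝ᵥ B *ᵥ v) + s*(s * (v ⬝ᵥ A₁ *ᵥ v))
        = s*(y k ⬝ᵥ A₁ *ᵥ v) + s*(y k ⬝ᵥ A₂ *ᵥ v) := by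
      have := congrArg (fun t : ℝ => s * t) hc2
      simp only [mul_add] at this
      linarith [this]
    have hD : 0 ≤ 2*(w ⬝ᵥ v) - τ*(v ⬝ᵥ B *ᵥ v) := by
      rw [hwv]; linarith [hc1, hc2s, h3, h4, hr2]
    have qleB : (w - τ • (B *ᵥ v)) ⬝ᵥ B⁻¹ *ᵥ (w - τ • (B *ᵥ v)) ≤ w ⬝ᵥ B⁻¹ *ᵥ w := by
      rw [expand]; nlinarith [mul_nonneg hτ.le hD]
    -- Claim A : source term
    have eψ1 : (B *ᵥ ψ) ⬝ᵥ B⁻¹ *ᵥ (B *ᵥ ψ) = ψ ⬝ᵥ B *ᵥ ψ := by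
      rw [hBcan, dotProduct_comm]
    have eψ2 : (A₁ *ᵥ ψ) ⬝ᵥ B⁻¹ *ᵥ (B *ᵥ ψ) = ψ ⬝ᵥ A₁ *ᵥ ψ := by
      rw [hBcan, dotProduct_comm]
    have eψ3 : (B *ᵥ ψ) ⬝ᵥ B⁻¹ *ᵥ (A₁ *ᵥ ψ) = ψ ⬝ᵥ A₁ *ᵥ ψ := by
      rw [swapDV hG.1, hBcan, dotProduct_comm]
    have qleA : (B *ᵥ ψ) ⬝ᵥ B⁻¹ *ᵥ (B *ᵥ ψ) ≤ φ k ⬝ᵥ B⁻¹ *ᵥ (φ k) := by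
      rw [← hψeq, eψ1]
      have expA : (S₁ *ᵥ ψ) ⬝ᵥ B⁻¹ *ᵥ (S₁ *ᵥ ψ)
          = ψ ⬝ᵥ B *ᵥ ψ + 2*(s*(ψ ⬝ᵥ A₁ *ᵥ ψ)) + s*(s*((A₁ *ᵥ ψ) ⬝ᵥ B⁻¹ *ᵥ (A₁ *ᵥ ψ))) := by
        rw [hS₁def]
        simp only [Matrix.add_mulVec, Matrix.smul_mulVec, Matrix.mulVec_add,
          Matrix.mulVec_smul, dotProduct_add, add_dotProduct, dotProduct_smul,
          smul_dotProduct, smul_eq_mul, eψ1, eψ2, eψ3]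
        ring
      rw [expA]
      have p1 : 0 ≤ ψ ⬝ᵥ A₁ *ᵥ ψ := psd_apply hA₁ ψ
      have p2 : 0 ≤ (A₁ *ᵥ ψ) ⬝ᵥ B⁻¹ *ᵥ (A₁ *ᵥ ψ) := psd_apply hG.posSemidef _
      nlinarith [mul_nonneg hs.le p1, mul_nonneg hs.le (mul_nonneg hs.le p2)]
    unfold normBinv
    rw [hupd]
    have tri := psd_triangle hG.posSemidef (w - τ • (B *ᵥ v)) (τ • (B *ᵥ ψ))
    have t1 : Real.sqrt ((w - τ • (B *ᵥ v)) ⬝ᵥ B⁻¹ *ᵥ (w - τ • (B *ᵥ v)))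
        ≤ Real.sqrt (w ⬝ᵥ B⁻¹ *ᵥ w) := Real.sqrt_le_sqrt qleB
    have t2 : (τ • (B *ᵥ ψ)) ⬝ᵥ B⁻¹ *ᵥ (τ • (B *ᵥ ψ))
        = τ^2 * ((B *ᵥ ψ) ⬝ᵥ B⁻¹ *ᵥ (B *ᵥ ψ)) := by
      simp only [Matrix.mulVec_smul, dotProduct_smul, smul_dotProduct, smul_eq_mul]; ring
    have t3 : Real.sqrt ((τ • (B *ᵥ ψ)) ⬝ᵥ B⁻¹ *ᵥ (τ • (B *ᵥ ψ)))
        ≤ τ * Real.sqrt (φ k ⬝ᵥ B⁻¹ *ᵥ φ k) := by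
      rw [t2, Real.sqrt_mul (sq_nonneg τ), Real.sqrt_sq hτ.le]
      exact mul_le_mul_of_nonneg_left (Real.sqrt_le_sqrt qleA) hτ.le
    linarith [tri, t1, t3]
  intro N
  induction N with
  | zero => simp
  | succ N ih =>
    rw [Finset.sum_range_succ, mul_add]
    have hstep := step N
    linarith [hstep, ih]
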